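/- Determinant product inequality: with the notation of the context, if Q_t − Q is positive semidefinite, then det Σ_t · det S ≤ det Q_t · det R. -/

import Mathlib

open Matrix

/-- Determinant product inequality: with `S = H·Q·Hᵀ + R`,
`S_t = H·Q_t·Hᵀ + R`, `K_t = Q_t·Hᵀ·S_t⁻¹` and
`Σ_t = (I − K_t·H)·Q·(I − K_t·H)ᵀ + K_t·R·K_tᵀ`, if `Q_t − Q` is positive
semidefinite then `det Σ_t · det S ≤ det Q_t · det R`. -/

lemma myPsdDetNonneg {n : Type*} [Fintype n] [DecidableEq n] {A : Matrix n n ℝ}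
    (hA : A.PosSemidef) : 0 ≤ A.det := by
  rw [hA.1.det_eq_prod_eigenvalues]
  exact Finset.prod_nonneg fun i _ => hA.eigenvalues_nonneg i

lemma myPosDefOfDetNeZero {n : Type*} [Fintype n] [DecidableEq n] {A : Matrix n n ℝ}
    (hA : A.PosSemidef) (hdet : A.det ≠ 0) : A.PosDef := by
  refine posDef_iff_dotProduct_mulVec.mpr ⟨hA.1, fun x hx => ?_⟩
  rcases lt_or_eq_of_le (hA.dotProduct_mulVec_nonneg x) with h | h
  · exact h
  · exfalso
    have h0 : A *ᵥ x = 0 := (hA.dotProduct_mulVec_zero_iff x).mp h.symm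
    have : x = 0 := by
      have hinv : A⁻¹ *ᵥ (A *ᵥ x) = x := by
        rw [mulVec_mulVec, nonsing_inv_mul A (isUnit_iff_ne_zero.mpr hdet), one_mulVec]
      rw [h0, mulVec_zero] at hinv
      exact hinv.symm
    exact hx this

lemma myOneLeDetOneAdd {n : Type*} [Fintype n] [DecidableEq n] {C : Matrix n n ℝ}
    (hC : C.PosSemidef) : 1 ≤ (1 + C).det := by
  have hH := hC.1
  have hspec := hH.spectral_theorem
  set U := (hH.eigenvectorUnitary : Matrix n n ℝ) with hU
  have hUU : U * star U = 1 := mem_unitaryGroup_iff.mp hH.eigenvectorUnitary.2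
  have h1 : (1 : Matrix n n ℝ) = U * 1 * star U := by rw [Matrix.mul_one, hUU]
  have key : 1 + C = U * (1 + diagonal (RCLike.ofReal ∘ hH.eigenvalues)) * star U := by
    rw [Matrix.mul_add, Matrix.add_mul, ← h1]
    nth_rewrite 1 [hspec]; rw [Unitary.conjStarAlgAut_apply]
  rw [key, det_mul, det_mul]
  have : det U * det (star U) = 1 := by
    rw [← det_mul, hUU, det_one]
  rw [mul_comm (det U), mul_assoc, this, mul_one]
  have : (1 : Matrix n n ℝ) + diagonal (RCLike.ofReal ∘ hH.eigenvalues)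
      = diagonal (fun i => 1 + hH.eigenvalues i) := by
    rw [← diagonal_one, diagonal_add]
    rfl
  rw [this, det_diagonal]
  calc (1:ℝ) = ∏ _i : n, (1:ℝ) := by simp
    _ ≤ ∏ i : n, (1 + hH.eigenvalues i) := by
        apply Finset.prod_le_prod
        · intro i _; norm_num
        · intro i _; linarith [hC.eigenvalues_nonneg i]

open scoped MatrixOrder in
lemma myDetMono {n : Type*} [Fintype n] [DecidableEq n] {A B : Matrix n n ℝ}
    (hA : A.PosSemidef) (hBA : (B - A).PosSemidef) : A.det ≤ B.det := by
  by_cases hdet : A.det = 0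
  · rw [hdet]
    have : B.PosSemidef := by simpa using hBA.add hA
    exact myPsdDetNonneg this
  · have hApd : A.PosDef := myPosDefOfDetNeZero hA hdet
    set T := CFC.sqrt A with hT
    have hTT : T * T = A := CFC.sqrt_mul_sqrt_self A hA.nonneg
    have hTdet : T.det ≠ 0 := by
      intro h
      apply hdet
      rw [← hTT, det_mul, h, zero_mul]
    have hTunit : IsUnit T.det := isUnit_iff_ne_zero.mpr hTdet
    have hTherm : Tᵀ = T := (CFC.sqrt_nonneg A).posSemidef.1
    have hTinv : T⁻¹ * T = 1 := nonsing_inv_mul T hTunit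
    have hTinv' : T * T⁻¹ = 1 := mul_nonsing_inv T hTunit
    have hTinvherm : (T⁻¹)ᵀ = T⁻¹ := by
      rw [transpose_nonsing_inv, hTherm]
    have hC : (T⁻¹ * (B - A) * (T⁻¹)ᴴ).PosSemidef := hBA.mul_mul_conjTranspose_same T⁻¹
    have hCe : (T⁻¹ * (B - A) * (T⁻¹)ᴴ) = T⁻¹ * (B - A) * T⁻¹ := by
      rw [conjTranspose_eq_transpose_of_trivial, hTinvherm]
    rw [hCe] at hC
    have hB : B = T * (1 + T⁻¹ * (B - A) * T⁻¹) * T := by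
      rw [Matrix.mul_add, Matrix.add_mul, Matrix.mul_one, hTT]
      have : T * (T⁻¹ * (B - A) * T⁻¹) * T = B - A := by
        rw [← Matrix.mul_assoc, ← Matrix.mul_assoc, hTinv', Matrix.one_mul,
          Matrix.mul_assoc, hTinv, Matrix.mul_one]
      rw [this]
      abel
    have hAd : A.det = T.det * T.det := by rw [← hTT, det_mul]
    have hdetB : B.det = A.det * (1 + T⁻¹ * (B - A) * T⁻¹).det := by
      conv_lhs => rw [hB]
      rw [det_mul, det_mul, hAd]
      ring
    rw [hdetB]
    nth_rewrite 1 [← mul_one A.det]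
    exact mul_le_mul_of_nonneg_left (myOneLeDetOneAdd hC) (le_of_lt hApd.det_pos)


theorem determinant_product_inequality
    {d m : ℕ} (hd : 1 ≤ d) (hm : 1 ≤ m)
    (H : Matrix (Fin m) (Fin d) ℝ)
    (Q Qt : Matrix (Fin d) (Fin d) ℝ) (R : Matrix (Fin m) (Fin m) ℝ)
    (hQ : Q.PosDef) (hQt : Qt.PosDef) (hR : R.PosDef)
    (S St : Matrix (Fin m) (Fin m) ℝ)
    (hS : S = H * Q * Hᵀ + R) (hSt : St = H * Qt * Hᵀ + R)
    (Kt : Matrix (Fin d) (Fin m) ℝ) (hKt : Kt = Qt * Hᵀ * St⁻¹)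
    (Sigt : Matrix (Fin d) (Fin d) ℝ)
    (hSigt : Sigt = (1 - Kt * H) * Q * (1 - Kt * H)ᵀ + Kt * R * Ktᵀ)
    (hQtQ : (Qt - Q).PosSemidef) :
    Sigt.det * S.det ≤ Qt.det * R.det := by
  have hct : ∀ {a b : ℕ} (M : Matrix (Fin a) (Fin b) ℝ), Mᴴ = Mᵀ :=
    fun M => conjTranspose_eq_transpose_of_trivial M
  have hHQH : (H * Q * Hᵀ).PosSemidef := by
    have := hQ.posSemidef.mul_mul_conjTranspose_same H
    rwa [hct] at this
  have hHQtH : (H * Qt * Hᵀ).PosSemidef := by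
    have := hQt.posSemidef.mul_mul_conjTranspose_same H
    rwa [hct] at this
  have hSpd : S.PosDef := by rw [hS]; exact Matrix.PosDef.posSemidef_add hHQH hR
  have hStpd : St.PosDef := by rw [hSt]; exact Matrix.PosDef.posSemidef_add hHQtH hR
  have hStunit : IsUnit St.det := isUnit_iff_ne_zero.mpr hStpd.det_pos.ne'
  have hQtunit : IsUnit Qt.det := isUnit_iff_ne_zero.mpr hQt.det_pos.ne'
  have hKtSt : Kt * St = Qt * Hᵀ := by
    rw [hKt, Matrix.mul_assoc, nonsing_inv_mul St hStunit, Matrix.mul_one]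
  have h1 : Kt * (H * (Qt * (Hᵀ * Ktᵀ))) + Kt * (R * Ktᵀ) = Qt * (Hᵀ * Ktᵀ) := by
    have h := congrArg (· * Ktᵀ) hKtSt
    simpa [hSt, Matrix.add_mul, Matrix.mul_add, Matrix.mul_assoc] using h
  have hId : (1 - Kt * H) * Qt * (1 - Kt * H)ᵀ + Kt * R * Ktᵀ = Qt - Kt * H * Qt := by
    rw [transpose_sub, transpose_one, transpose_mul]
    simp only [Matrix.sub_mul, Matrix.mul_sub, Matrix.one_mul, Matrix.mul_one, Matrix.mul_assoc]
    nth_rewrite 1 [← h1]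
    abel
  have hSigtpsd : Sigt.PosSemidef := by
    rw [hSigt]
    have hp1 := hQ.posSemidef.mul_mul_conjTranspose_same (1 - Kt * H)
    have hp2 := hR.posSemidef.mul_mul_conjTranspose_same Kt
    rw [hct] at hp1 hp2
    exact hp1.add hp2
  have hdiff : ((Qt - Kt * H * Qt) - Sigt).PosSemidef := by
    have he : (Qt - Kt * H * Qt) - Sigt = (1 - Kt * H) * (Qt - Q) * (1 - Kt * H)ᵀ := by
      rw [← hId, hSigt]
      simp only [Matrix.sub_mul, Matrix.mul_sub]
      abel
    rw [he]
    have := hQtQ.mul_mul_conjTranspose_same (1 - Kt * H)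
    rwa [hct] at this
  have hle1 : Sigt.det ≤ (Qt - Kt * H * Qt).det := myDetMono hSigtpsd hdiff
  have hdiff2 : (St - S).PosSemidef := by
    have he : St - S = H * (Qt - Q) * Hᵀ := by
      rw [hSt, hS]
      simp only [Matrix.sub_mul, Matrix.mul_sub]
      abel
    rw [he]
    have := hQtQ.mul_mul_conjTranspose_same H
    rwa [hct] at this
  have hle2 : S.det ≤ St.det := myDetMono hSpd.posSemidef hdiff2
  haveI iSt : Invertible St := St.invertibleOfIsUnitDet hStunit
  haveI iQt : Invertible Qt := Qt.invertibleOfIsUnitDet hQtunit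
  have e1 : (fromBlocks Qt (Qt * Hᵀ) (H * Qt) St).det
      = St.det * (Qt - Kt * H * Qt).det := by
    rw [det_fromBlocks₂₂]
    congr 2
    rw [invOf_eq_nonsing_inv, hKt]
    simp only [Matrix.mul_assoc]
  have e2 : (fromBlocks Qt (Qt * Hᵀ) (H * Qt) St).det
      = Qt.det * R.det := by
    rw [det_fromBlocks₁₁]
    congr 1
    rw [invOf_eq_nonsing_inv, Matrix.mul_assoc, nonsing_inv_mul_cancel_left _ _ hQtunit,
      hSt, add_sub_cancel_left]
  have hSchur : (Qt - Kt * H * Qt).det * St.det = Qt.det * R.det := by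
    rw [mul_comm, ← e1, e2]
  calc Sigt.det * S.det ≤ (Qt - Kt * H * Qt).det * St.det := by
        apply mul_le_mul hle1 hle2 hSpd.det_pos.le
        exact le_trans (myPsdDetNonneg hSigtpsd) hle1
    _ = Qt.det * R.det := hSchur
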